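/- Conversely, if there exists a probability space (Ω, 𝒜, ν) and events A_1,...,A_n ∈ 𝒜 such that d(i,j) = ν(A_i △ A_j) for all 1 ≤ i < j ≤ n, then d ∈ CUT(n). -/

import Mathlib

open Finset MeasureTheory

noncomputable section

/-- Points of the discrete cube `{0,1}^n`. -/
abbrev Cube (n : ℕ) := Fin n → Bool

/-- Index set of pairs `1 ≤ i < j ≤ n`. -/
abbrev En (n : ℕ) := {p : Fin n × Fin n // p.1 < p.2}

/-- `μ` is an `n`-variate symmetric Bernoulli distribution: nonnegative,
sums to one, and every coordinate marginal is `Bern(1/2)`. -/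
def inBn (n : ℕ) (μ : Cube n → ℝ) : Prop :=
  (∀ y, 0 ≤ μ y) ∧ (∑ y, μ y) = 1 ∧
    ∀ k : Fin n, (∑ y ∈ Finset.univ.filter (fun y : Cube n => y k = false), μ y) = 1/2

/-- The uniform distribution on the diagonal `{x, 1 - x}`. -/
def piDiag (n : ℕ) (x : Cube n) : Cube n → ℝ :=
  fun y => if y = x ∨ y = (fun i => !(x i)) then 1/2 else 0

/-- Agreement probability of coordinates `i`, `j` under `μ`. -/
def lam (n : ℕ) (μ : Cube n → ℝ) (i j : Fin n) : ℝ :=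
  ∑ y ∈ Finset.univ.filter (fun y : Cube n => y i = y j), μ y

/-- Agreement vector of `μ`, indexed by pairs `i < j`. -/
def lamVec (n : ℕ) (μ : Cube n → ℝ) : En n → ℝ :=
  fun p => lam n μ p.1.1 p.1.2

/-- Cut vector of the subset `S` of `{1,...,n}`. -/
def cutVec (n : ℕ) (S : Finset (Fin n)) : En n → ℝ :=
  fun p => if (p.1.1 ∈ S ↔ p.1.2 ∈ S) then 0 else 1

/-- The cut polytope `CUT(n)`. -/
def CUT (n : ℕ) : Set (En n → ℝ) :=
  convexHull ℝ {v | ∃ S : Finset (Fin n), v = cutVec n S}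

/-- The switched cut polytope `CUT*(n)`. -/
def CUTstar (n : ℕ) : Set (En n → ℝ) :=
  convexHull ℝ {v | ∃ S : Finset (Fin n), v = fun p => 1 - cutVec n S p}

/-- Correlation vector of `μ`: `ρ(i,j) = 4 E[Y_i Y_j] - 1`. -/
def corrVec (n : ℕ) (μ : Cube n → ℝ) : En n → ℝ :=
  fun p => 4 * (∑ y : Cube n,
    μ y * (if y p.1.1 then (1:ℝ) else 0) * (if y p.1.2 then (1:ℝ) else 0)) - 1

theorem events_symmDiff_mem_cut (n : ℕ) (d : En n → ℝ)
    {Ω : Type*} [MeasurableSpace Ω] (ν : Measure Ω) [IsProbabilityMeasure ν]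
    (A : Fin n → Set Ω) (hA : ∀ i, MeasurableSet (A i))
    (hd : ∀ p : En n, d p = (ν (symmDiff (A p.1.1) (A p.1.2))).toReal) :
    d ∈ CUT n := by
  classical
  -- the atoms of the partition generated by the events
  set B : Finset (Fin n) → Set Ω := fun S => {ω | ∀ i, ω ∈ A i ↔ i ∈ S} with hB
  have hmeas : ∀ S, MeasurableSet (B S) := by
    intro S
    have hEq : B S = ⋂ i, (if i ∈ S then A i else (A i)ᶜ) := by
      ext ω
      simp only [hB, Set.mem_setOf_eq, Set.mem_iInter]
      constructor
      · intro h i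
        by_cases hi : i ∈ S
        · simpa [hi] using (h i).mpr hi
        · simp only [hi, if_false, Set.mem_compl_iff]
          exact fun hAi => hi ((h i).mp hAi)
      · intro h i
        have := h i
        by_cases hi : i ∈ S
        · simp only [hi, if_true] at this
          exact ⟨fun _ => hi, fun _ => this⟩
        · simp only [hi, if_false, Set.mem_compl_iff] at this
          exact ⟨fun hAi => absurd hAi this, fun hS => absurd hS hi⟩
    rw [hEq]
    exact MeasurableSet.iInter fun i => by
      split_ifs
      · exact hA i
      · exact (hA i).compl
  -- each ω belongs to exactly one atom
  have hmem_iff : ∀ ω S, ω ∈ B S ↔ S = Finset.univ.filter (fun i => ω ∈ A i) := by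
    intro ω S
    constructor
    · intro h
      ext i
      simp only [Finset.mem_filter, Finset.mem_univ, true_and]
      exact (h i).symm
    · intro h
      subst h
      intro i
      simp only [Finset.mem_filter, Finset.mem_univ, true_and]
  have hdisj : ((Finset.univ : Finset (Finset (Fin n))) : Set (Finset (Fin n))).PairwiseDisjoint B := by
    intro S _ T _ hST
    simp only [Function.onFun, Set.disjoint_left]
    intro ω hS hT
    exact hST (((hmem_iff ω S).mp hS).trans ((hmem_iff ω T).mp hT).symm)
  -- weights
  set w : Finset (Fin n) → ℝ := fun S => (ν (B S)).toReal with hw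
  have hw0 : ∀ S, 0 ≤ w S := fun S => ENNReal.toReal_nonneg
  have hcover : (⋃ S ∈ (Finset.univ : Finset (Finset (Fin n))), B S) = Set.univ := by
    ext ω
    simp only [Set.mem_iUnion, Set.mem_univ, iff_true]
    exact ⟨Finset.univ.filter (fun i => ω ∈ A i), Finset.mem_univ _,
      (hmem_iff ω _).mpr rfl⟩
  have hsum1 : ∑ S : Finset (Fin n), w S = 1 := by
    have h1 : ∑ S : Finset (Fin n), ν (B S) = 1 := by
      rw [← measure_biUnion_finset hdisj (fun S _ => hmeas S), hcover,
        measure_univ]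
    have := congrArg ENNReal.toReal h1
    rwa [ENNReal.toReal_sum (fun S _ => measure_ne_top ν (B S)), ENNReal.toReal_one] at this
  -- d is the convex combination of the cut vectors with weights w
  have hdcomb : d = ∑ S : Finset (Fin n), w S • cutVec n S := by
    funext p
    rw [hd p]
    have hset : symmDiff (A p.1.1) (A p.1.2) =
        ⋃ S ∈ Finset.univ.filter (fun S : Finset (Fin n) => ¬ (p.1.1 ∈ S ↔ p.1.2 ∈ S)), B S := by
      ext ω
      simp only [Set.mem_iUnion, Finset.mem_filter, Finset.mem_univ, true_and,
        Set.mem_symmDiff]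
      constructor
      · intro h
        refine ⟨Finset.univ.filter (fun i => ω ∈ A i), ?_, (hmem_iff ω _).mpr rfl⟩
        simp only [Finset.mem_filter, Finset.mem_univ, true_and]
        rcases h with ⟨h1, h2⟩ | ⟨h1, h2⟩
        · intro hiff; exact h2 (hiff.mp h1)
        · intro hiff; exact h2 (hiff.mpr h1)
      · rintro ⟨S, hScond, hωS⟩
        have h1 := hωS p.1.1
        have h2 := hωS p.1.2
        by_cases hi : p.1.1 ∈ S
        · left
          exact ⟨h1.mpr hi, fun hj => hScond ⟨fun _ => (h2.mp hj), fun _ => hi⟩⟩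
        · right
          have hj : p.1.2 ∈ S := by
            by_contra hj
            exact hScond ⟨fun h => absurd h hi, fun h => absurd h hj⟩
          exact ⟨h2.mpr hj, fun h => hi (h1.mp h)⟩
    rw [hset, measure_biUnion_finset (hdisj.subset (by simp)) (fun S _ => hmeas S),
      ENNReal.toReal_sum (fun S _ => measure_ne_top ν (B S))]
    have : ∀ S : Finset (Fin n), (w S • cutVec n S) p =
        if (p.1.1 ∈ S ↔ p.1.2 ∈ S) then 0 else w S := by
      intro S
      simp only [Pi.smul_apply, smul_eq_mul, cutVec]
      split_ifs <;> ring
    rw [Finset.sum_apply]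
    simp only [this]
    rw [Finset.sum_filter]
    exact Finset.sum_congr rfl fun S _ => by
      by_cases h : (p.1.1 ∈ S ↔ p.1.2 ∈ S) <;> simp [h, hw]
  rw [hdcomb, ← Finset.centerMass_eq_of_sum_1 _ _ hsum1]
  exact Finset.centerMass_mem_convexHull _ (fun S _ => hw0 S)
    (by rw [hsum1]; norm_num) (fun S _ => ⟨S, rfl⟩)
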